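/- For all x ∈ ℤ and y ∈ ℤ with y ≥ x−1, the tail sum of the kernel P satisfies ∑_{z ≥ y} P(x,z) = ∏_{z=x}^{y} p(z) (empty product equal to 1 when y = x−1). Moreover, if w(−1) < w(1), then: (a) for x < 0 and x−1 ≤ y < 0 one has ∑_{z ≥ y} P(x,z) ≥ q(1)^{y−x+1}; (b) for 0 ≤ x−1 ≤ y one has ∑_{z ≥ y} P(x,z) ≤ p(1)^{y−x+1}. -/

import Mathlib

open MeasureTheory Filter
open scoped BigOperators ENNReal

noncomputable section

/-- `p(x) = w(-x)/(w(x)+w(-x))`. -/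
def pfun (w : ℤ → ℝ) (x : ℤ) : ℝ := w (-x) / (w x + w (-x))

/-- `q(x) = w(x)/(w(x)+w(-x))`. -/
def qfun (w : ℤ → ℝ) (x : ℤ) : ℝ := w x / (w x + w (-x))

/-- The Markov transition kernel `P(x,y)`. -/
def Pker (w : ℤ → ℝ) (x y : ℤ) : ℝ :=
  if x - 1 ≤ y then (∏ z ∈ Finset.Icc x y, pfun w z) * qfun w (y + 1) else 0

/-- The `m`-step transition kernel. -/
def Pm (w : ℤ → ℝ) : ℕ → ℤ → ℤ → ℝ
  | 0, x, y => if x = y then 1 else 0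
  | m + 1, x, y => ∑' z : ℤ, Pm w m x z * Pker w z y

/-- The normalizing constant `Z`. -/
def Zconst (w : ℤ → ℝ) : ℝ :=
  2 * ∑' x : ℕ, ∏ z ∈ Finset.Icc (1 : ℤ) (x : ℤ), w (-z) / w z

/-- The stationary distribution `ρ`. -/
def rho (w : ℤ → ℝ) (x : ℤ) : ℝ :=
  (Zconst w)⁻¹ * ∏ z ∈ Finset.Icc (1 : ℤ) (|2 * x + 1| / 2), w (-z) / w z

/-- The weight function `w` is positive, nondecreasing and satisfies
`lim_{z→∞} (w(z) - w(-z)) > 0`. -/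
def GoodWeight (w : ℤ → ℝ) : Prop :=
  (∀ z, 0 < w z) ∧ (∀ z, w z ≤ w (z + 1)) ∧
    ∃ c > (0 : ℝ), ∀ᶠ z : ℤ in atTop, c ≤ w z - w (-z)

/-- `η` is a Markov chain with (sub)stochastic kernel `K` started at `a`,
characterized through its cylinder probabilities. -/
def KChain {Ω : Type*} [MeasurableSpace Ω] (μ : Measure Ω)
    (K : ℤ → ℤ → ℝ) (η : ℕ → Ω → ℤ) (a : ℤ) : Prop :=
  (∀ n, Measurable (η n)) ∧
  ∀ (n : ℕ) (x : ℕ → ℤ),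
    μ {ω | ∀ i ≤ n, η i ω = x i} =
      ENNReal.ofReal ((if x 0 = a then (1 : ℝ) else 0) *
        ∏ i ∈ Finset.range n, K (x i) (x (i + 1)))

lemma wmono {w : ℤ → ℝ} (hw : GoodWeight w) : Monotone w :=
  monotone_int_of_le_succ hw.2.1

lemma denom_pos {w : ℤ → ℝ} (hw : GoodWeight w) (z : ℤ) : 0 < w z + w (-z) :=
  add_pos (hw.1 _) (hw.1 _)

lemma pfun_nonneg' {w : ℤ → ℝ} (hw : GoodWeight w) (z : ℤ) : 0 ≤ pfun w z :=
  div_nonneg (hw.1 _).le (denom_pos hw z).le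

lemma pfun_le_one {w : ℤ → ℝ} (hw : GoodWeight w) (z : ℤ) : pfun w z ≤ 1 := by
  rw [pfun, div_le_one (denom_pos hw z)]
  linarith [hw.1 z]

lemma qfun_eq {w : ℤ → ℝ} (hw : GoodWeight w) (z : ℤ) : qfun w z = 1 - pfun w z := by
  have h := (denom_pos hw z).ne'
  rw [qfun, pfun]
  field_simp
  ring

/-- geometric decay -/
lemma geom_decay (b : ℕ → ℝ) (hb : ∀ n, 0 ≤ b n) (r : ℝ) (hr0 : 0 ≤ r) (hr1 : r < 1)
    (N0 : ℕ) (h : ∀ n, N0 ≤ n → b (n + 1) ≤ r * b n) : Tendsto b atTop (nhds 0) := by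
  have key : ∀ m : ℕ, b (m + N0) ≤ b N0 * r ^ m := by
    intro m
    induction m with
    | zero => simp
    | succ m ih =>
        have h1 : b (m + N0 + 1) ≤ r * b (m + N0) := h _ (by omega)
        calc b (m + 1 + N0) = b (m + N0 + 1) := by ring_nf
          _ ≤ r * b (m + N0) := h1
          _ ≤ r * (b N0 * r ^ m) := by
              exact mul_le_mul_of_nonneg_left ih hr0
          _ = b N0 * r ^ (m + 1) := by ring
  rw [← tendsto_add_atTop_iff_nat N0]
  have hgeo : Tendsto (fun m : ℕ => b N0 * r ^ m) atTop (nhds 0) := by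
    simpa using (tendsto_pow_atTop_nhds_zero_of_lt_one hr0 hr1).const_mul (b N0)
  exact squeeze_zero (fun m => hb _) key hgeo

lemma prod_Icc_succ (f : ℤ → ℝ) {x m : ℤ} (hxm : x ≤ m + 1) :
    ∏ z ∈ Finset.Icc x (m + 1), f z = (∏ z ∈ Finset.Icc x m, f z) * f (m + 1) := by
  have h1 : Finset.Icc x (m + 1) = insert (m + 1) (Finset.Icc x m) := by
    ext t
    simp only [Finset.mem_Icc, Finset.mem_insert]
    omega
  rw [h1, Finset.prod_insert (by simp), mul_comm]

lemma tail_hasSum (w : ℤ → ℝ) (hw : GoodWeight w) (x y : ℤ) (hxy : x - 1 ≤ y) :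
    HasSum (fun z : ℤ => if y ≤ z then Pker w x z else 0)
      (∏ z ∈ Finset.Icc x y, pfun w z) := by
  set b : ℕ → ℝ := fun n => ∏ z ∈ Finset.Icc x (y + n), pfun w z with hb
  have hbnonneg : ∀ n, 0 ≤ b n := fun n =>
    Finset.prod_nonneg fun z _ => pfun_nonneg' hw z
  have hbsucc : ∀ n : ℕ, b (n + 1) = b n * pfun w (y + n + 1) := by
    intro n
    have : (y : ℤ) + (n + 1 : ℕ) = (y + n) + 1 := by push_cast; ring
    rw [hb]
    simp only [this]
    exact prod_Icc_succ (pfun w) (by push_cast; omega)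
  -- limit of b is 0
  have hb0 : Tendsto b atTop (nhds 0) := by
    obtain ⟨c, hc, hev⟩ := hw.2.2
    obtain ⟨z0, hz0⟩ := eventually_atTop.1 hev
    set r : ℝ := w 0 / (2 * w 0 + c) with hr
    have hw0 := hw.1 0
    have hrden : 0 < 2 * w 0 + c := by linarith
    have hr0 : 0 ≤ r := div_nonneg hw0.le hrden.le
    have hr1 : r < 1 := by rw [hr, div_lt_one hrden]; linarith
    have hple : ∀ z : ℤ, max z0 0 ≤ z → pfun w z ≤ r := by
      intro z hz
      have h1 : c ≤ w z - w (-z) := hz0 z (le_trans (le_max_left _ _) hz)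
      have h2 : w (-z) ≤ w 0 := wmono hw (by omega)
      have h3 : 0 < w (-z) := hw.1 _
      have h4 : 0 < w z + w (-z) := denom_pos hw z
      rw [pfun, div_le_iff₀ h4]
      rw [hr, div_mul_eq_mul_div, le_div_iff₀ hrden]
      nlinarith
    set N0 : ℕ := (max z0 0 - y).toNat with hN0
    have hstep : ∀ n, N0 ≤ n → b (n + 1) ≤ r * b n := by
      intro n hn
      rw [hbsucc n, mul_comm]
      refine mul_le_mul_of_nonneg_right (hple _ ?_) (hbnonneg n)
      have := Int.self_le_toNat (max z0 0 - y)
      have hn' : (N0 : ℤ) ≤ n := by exact_mod_cast hn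
      omega
    exact geom_decay b hbnonneg r hr0 hr1 N0 hstep
  -- value of f at y + n
  have hf : ∀ n : ℕ, (if y ≤ y + (n : ℤ) then Pker w x (y + (n : ℤ)) else 0)
      = b n - b (n + 1) := by
    intro n
    have h1 : y ≤ y + (n : ℤ) := by omega
    have h2 : x - 1 ≤ y + (n : ℤ) := by omega
    rw [if_pos h1, Pker, if_pos h2, qfun_eq hw, hbsucc n]
    have : (y : ℤ) + (n : ℤ) + 1 = y + n + 1 := by ring
    rw [this]
    ring
  -- telescoping hasSum
  have hnonneg2 : ∀ n : ℕ, 0 ≤ b n - b (n + 1) := by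
    intro n
    rw [hbsucc n]
    nlinarith [hbnonneg n, pfun_le_one hw (y + n + 1), pfun_nonneg' hw (y + n + 1),
      hbnonneg (n + 1)]
  have htel : HasSum (fun n : ℕ => b n - b (n + 1)) (b 0) := by
    rw [hasSum_iff_tendsto_nat_of_nonneg hnonneg2]
    have hsum : ∀ n : ℕ, ∑ i ∈ Finset.range n, (b i - b (i + 1)) = b 0 - b n :=
      fun n => Finset.sum_range_sub' b n
    simp only [hsum]
    simpa using tendsto_const_nhds.sub hb0
  have hb00 : b 0 = ∏ z ∈ Finset.Icc x y, pfun w z := by simp [hb]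
  -- transfer along the injection n ↦ y + n
  have hinj : Function.Injective (fun n : ℕ => y + (n : ℤ)) := by
    intro a b hab
    simpa using hab
  have hsupp : ∀ z : ℤ, z ∉ Set.range (fun n : ℕ => y + (n : ℤ)) →
      (if y ≤ z then Pker w x z else 0) = 0 := by
    intro z hz
    rw [if_neg]
    intro hyz
    exact hz ⟨(z - y).toNat, by simp; omega⟩
  rw [← hb00]
  rw [← Function.Injective.hasSum_iff hinj hsupp]
  have heq : ((fun z : ℤ => if y ≤ z then Pker w x z else 0) ∘ fun n : ℕ => y + (n : ℤ))
      = fun n : ℕ => b n - b (n + 1) := funext fun n => hf n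
  rw [heq]
  exact htel

/-- tail sums of the kernel `P`, together with the stochastic domination
bounds valid under `w(-1) < w(1)`. -/
theorem stmt_8 (w : ℤ → ℝ) (hw : GoodWeight w) :
    (∀ x y : ℤ, x - 1 ≤ y →
      ∑' z : ℤ, (if y ≤ z then Pker w x z else 0) = ∏ z ∈ Finset.Icc x y, pfun w z) ∧
    (w (-1) < w 1 →
      (∀ x y : ℤ, x < 0 → x - 1 ≤ y → y < 0 →
        qfun w 1 ^ (y - x + 1).toNat ≤ ∑' z : ℤ, (if y ≤ z then Pker w x z else 0)) ∧
      (∀ x y : ℤ, 0 ≤ x - 1 → x - 1 ≤ y →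
        ∑' z : ℤ, (if y ≤ z then Pker w x z else 0) ≤ pfun w 1 ^ (y - x + 1).toNat)) := by
  have hcard : ∀ x y : ℤ, (Finset.Icc x y).card = (y - x + 1).toNat := by
    intro x y; rw [Int.card_Icc]; congr 1; ring
  refine ⟨fun x y hxy => (tail_hasSum w hw x y hxy).tsum_eq, fun _hlt => ⟨?_, ?_⟩⟩
  · intro x y hx hxy hy
    rw [(tail_hasSum w hw x y hxy).tsum_eq]
    calc qfun w 1 ^ (y - x + 1).toNat = ∏ _z ∈ Finset.Icc x y, qfun w 1 := by
          rw [Finset.prod_const, hcard]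
      _ ≤ ∏ z ∈ Finset.Icc x y, pfun w z := by
          refine Finset.prod_le_prod
            (fun z _ => div_nonneg (hw.1 _).le (denom_pos hw 1).le) ?_
          intro z hz
          simp only [Finset.mem_Icc] at hz
          have h1 : w 1 ≤ w (-z) := wmono hw (by omega)
          have h2 : w z ≤ w (-1) := wmono hw (by omega)
          rw [qfun, pfun, div_le_div_iff₀ (denom_pos hw 1) (denom_pos hw z)]
          nlinarith [hw.1 1, hw.1 (-1), hw.1 z, hw.1 (-z)]
  · intro x y hx hxy
    rw [(tail_hasSum w hw x y hxy).tsum_eq]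
    calc ∏ z ∈ Finset.Icc x y, pfun w z ≤ ∏ _z ∈ Finset.Icc x y, pfun w 1 := by
          refine Finset.prod_le_prod (fun z _ => pfun_nonneg' hw z) ?_
          intro z hz
          simp only [Finset.mem_Icc] at hz
          have h1 : w (-z) ≤ w (-1) := wmono hw (by omega)
          have h2 : w 1 ≤ w z := wmono hw (by omega)
          rw [pfun, pfun, div_le_div_iff₀ (denom_pos hw z) (denom_pos hw 1)]
          nlinarith [hw.1 1, hw.1 (-1), hw.1 z, hw.1 (-z)]
      _ = pfun w 1 ^ (y - x + 1).toNat := by rw [Finset.prod_const, hcard]
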